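/- Let (M,g) be a Kähler manifold and p ∈ M. The function η(p), defined as the maximum dimension of a complex linear subspace L ⊆ T_pM on which the holomorphic sectional curvature H vanishes on all nonzero vectors, is upper semicontinuous in p; consequently the set {p ∈ M : η(p) = min_q η(q)} is open in the classical topology. -/

import Mathlib

open Module

noncomputable section Stmt2Aux

/-- The identity continuous linear equivalence between `EuclideanSpace ℂ (Fin n)`
and `Fin n → ℂ`. -/
def eE (n : ℕ) : EuclideanSpace ℂ (Fin n) ≃L[ℂ] (Fin n → ℂ) :=
  EuclideanSpace.equiv (Fin n) ℂ

/-- Characterization: there is a subspace of dimension at least `y` on which `H`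
vanishes away from `0` iff there is an orthonormal `y`-frame whose nonzero
combinations are sent to `0` by `H`. -/
lemma stmt2_char {n : ℕ} (H : (Fin n → ℂ) → ℝ) (y : ℕ) :
    (∃ L : Submodule ℂ (Fin n → ℂ), y ≤ finrank ℂ ↥L ∧ ∀ v ∈ L, v ≠ 0 → H v = 0) ↔
    (∃ v : Fin y → EuclideanSpace ℂ (Fin n), Orthonormal ℂ v ∧
      ∀ c : Fin y → ℂ, c ≠ 0 → H (eE n (∑ i, c i • v i)) = 0) := by
  constructor
  · rintro ⟨L, hy, hL⟩
    set e := (eE n).toLinearEquiv with he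
    set L' : Submodule ℂ (EuclideanSpace ℂ (Fin n)) := L.map (e.symm : (Fin n → ℂ) →ₗ[ℂ] EuclideanSpace ℂ (Fin n)) with hL'
    have hfr : finrank ℂ ↥L' = finrank ℂ ↥L := LinearEquiv.finrank_map_eq _ _
    have h' : y ≤ finrank ℂ ↥L' := hfr ▸ hy
    set b := stdOrthonormalBasis ℂ ↥L' with hb
    set v : Fin y → EuclideanSpace ℂ (Fin n) :=
      fun i => (b (Fin.castLE h' i) : EuclideanSpace ℂ (Fin n)) with hv
    refine ⟨v, ?_, ?_⟩
    · rw [orthonormal_iff_ite]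
      intro i j
      have := (orthonormal_iff_ite.mp b.orthonormal) (Fin.castLE h' i) (Fin.castLE h' j)
      simp only [hv]
      rw [← Submodule.coe_inner, this]
      simp [Fin.ext_iff]
    · intro c hc
      set w : ↥L' := ∑ i, c i • b (Fin.castLE h' i) with hw
      have hsum : (∑ i, c i • v i) = (w : EuclideanSpace ℂ (Fin n)) := by
        simp [hw, hv]
      have hwne : w ≠ 0 := by
        intro h0
        apply hc
        have hli : LinearIndependent ℂ (fun i => b (Fin.castLE h' i)) :=
          b.orthonormal.linearIndependent.comp _ (Fin.castLE_injective h')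
        exact funext (Fintype.linearIndependent_iff.mp hli c (hw ▸ h0))
      have hmem : e (w : EuclideanSpace ℂ (Fin n)) ∈ L := by
        obtain ⟨x, hx, hxw⟩ := w.2
        have : e (w : EuclideanSpace ℂ (Fin n)) = x := by
          rw [← hxw]; simp
        rwa [this]
      have hne : e (w : EuclideanSpace ℂ (Fin n)) ≠ 0 := by
        simp only [ne_eq, LinearEquiv.map_eq_zero_iff, ZeroMemClass.coe_eq_zero]
        exact hwne
      have : H (e (w : EuclideanSpace ℂ (Fin n))) = 0 := hL _ hmem hne
      rw [hsum]
      exact this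
  · rintro ⟨v, hv, hvH⟩
    set e := (eE n).toLinearEquiv with he
    set L0 : Submodule ℂ (EuclideanSpace ℂ (Fin n)) := Submodule.span ℂ (Set.range v) with hL0
    refine ⟨L0.map (e : EuclideanSpace ℂ (Fin n) →ₗ[ℂ] (Fin n → ℂ)), ?_, ?_⟩
    · have h1 : finrank ℂ ↥(L0.map (e : EuclideanSpace ℂ (Fin n) →ₗ[ℂ] (Fin n → ℂ))) = finrank ℂ ↥L0 := LinearEquiv.finrank_map_eq _ _
      have h2 : finrank ℂ ↥L0 = Fintype.card (Fin y) :=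
        finrank_span_eq_card hv.linearIndependent
      simp [h1, h2]
    · rintro u hu hu0
      obtain ⟨w, hwmem, rfl⟩ := hu
      obtain ⟨c, rfl⟩ := (Submodule.mem_span_range_iff_exists_fun ℂ).mp hwmem
      have hc : c ≠ 0 := by
        rintro rfl
        simp at hu0
      exact hvH c hc

end Stmt2Aux

theorem stmt2 (n : ℕ) (M : Type) [TopologicalSpace M]
    (H : M → (Fin n → ℂ) → ℝ)          -- holomorphic sectional curvature
    (hH : Continuous fun q : M × (Fin n → ℂ) => H q.1 q.2)
    (η : M → ℕ)
    (hη : ∀ p, η p = sSup {k | ∃ L : Submodule ℂ (Fin n → ℂ),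
        Module.finrank ℂ ↥L = k ∧ ∀ v ∈ L, v ≠ 0 → H p v = 0}) :
    UpperSemicontinuous η ∧ IsOpen {p | η p = ⨅ q, η q} := by
  -- the attainable-dimensions set
  set A : M → Set ℕ := fun p => {k | ∃ L : Submodule ℂ (Fin n → ℂ),
      Module.finrank ℂ ↥L = k ∧ ∀ v ∈ L, v ≠ 0 → H p v = 0} with hA
  have hbdd : ∀ p, ∀ k ∈ A p, k ≤ n := by
    rintro p k ⟨L, rfl, -⟩
    have := Submodule.finrank_le L
    simpa [Module.finrank_fin_fun] using this
  have hne : ∀ p, (0 : ℕ) ∈ A p := by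
    intro p
    refine ⟨⊥, finrank_bot ℂ _, ?_⟩
    intro v hv hv0
    exact absurd (Submodule.mem_bot ℂ |>.mp hv) hv0
  -- characterization of `y ≤ η p`
  have key : ∀ p y, y ≤ η p ↔
      ∃ L : Submodule ℂ (Fin n → ℂ), y ≤ finrank ℂ ↥L ∧ ∀ v ∈ L, v ≠ 0 → H p v = 0 := by
    intro p y
    constructor
    · intro hy
      have hmem : sSup (A p) ∈ A p := Nat.sSup_mem ⟨0, hne p⟩ ⟨n, hbdd p⟩
      obtain ⟨L, hL1, hL2⟩ := hmem
      exact ⟨L, by rw [hL1, ← hη p]; exact hy, hL2⟩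
    · rintro ⟨L, hL1, hL2⟩
      have : finrank ℂ ↥L ∈ A p := ⟨L, rfl, hL2⟩
      have hle : finrank ℂ ↥L ≤ sSup (A p) := le_csSup ⟨n, hbdd p⟩ this
      rw [hη p]
      exact hL1.trans hle
  -- closedness of `{p | y ≤ η p}` via compactness of orthonormal frames
  have closed_ge : ∀ y : ℕ, IsClosed {p : M | y ≤ η p} := by
    intro y
    set E := EuclideanSpace ℂ (Fin n)
    set F : Set (Fin y → E) := {v | Orthonormal ℂ v} with hF
    have hFc : IsClosed F := by
      have : F = ⋂ i : Fin y, ⋂ j : Fin y,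
          {v : Fin y → E | (inner ℂ (v i) (v j) : ℂ) = if i = j then 1 else 0} := by
        ext v
        simp only [hF, Set.mem_setOf_eq, Set.mem_iInter, orthonormal_iff_ite]
      rw [this]
      refine isClosed_iInter fun i => isClosed_iInter fun j => ?_
      exact isClosed_eq (Continuous.inner (continuous_apply i) (continuous_apply j))
        continuous_const
    have hFsub : F ⊆ Metric.closedBall 0 1 := by
      intro v hv
      rw [Metric.mem_closedBall, dist_zero_right]
      refine (pi_norm_le_iff_of_nonneg zero_le_one).mpr fun i => ?_
      rw [hv.1 i]
    have hFcomp : IsCompact F :=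
      (isCompact_closedBall (0 : Fin y → E) 1).of_isClosed_subset hFc hFsub
    haveI : CompactSpace F := isCompact_iff_compactSpace.mp hFcomp
    set C : Set (↥F × M) := {z | ∀ c : Fin y → ℂ, c ≠ 0 →
        H z.2 (eE n (∑ i, c i • (z.1 : Fin y → E) i)) = 0} with hC
    have hCc : IsClosed C := by
      have : C = ⋂ c ∈ {c : Fin y → ℂ | c ≠ 0},
          {z : ↥F × M | H z.2 (eE n (∑ i, c i • (z.1 : Fin y → E) i)) = 0} := by
        ext z; simp [hC]
      rw [this]
      refine isClosed_biInter fun c _ => ?_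
      have hcont : Continuous fun z : ↥F × M =>
          H z.2 (eE n (∑ i, c i • (z.1 : Fin y → E) i)) := by
        have h1 : Continuous fun z : ↥F × M => (eE n (∑ i, c i • (z.1 : Fin y → E) i)) := by
          refine (eE n).continuous.comp ?_
          refine continuous_finset_sum _ fun i _ => ?_
          exact (continuous_const (y := c i)).smul ((continuous_apply i).comp (continuous_subtype_val.comp continuous_fst))
        exact hH.comp (continuous_snd.prodMk h1)
      exact isClosed_eq hcont continuous_const
    have himg : {p : M | y ≤ η p} = Prod.snd '' C := by
      ext p
      simp only [Set.mem_setOf_eq, Set.mem_image, key p y, stmt2_char]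
      constructor
      · rintro ⟨v, hv, hvH⟩
        exact ⟨(⟨v, hv⟩, p), hvH, rfl⟩
      · rintro ⟨⟨⟨v, hv⟩, q⟩, hz, rfl⟩
        exact ⟨v, hv, hz⟩
    rw [himg]
    exact isClosedMap_snd_of_compactSpace C hCc
  have husc : UpperSemicontinuous η := by
    intro p y hpy
    have hopen : IsOpen {q : M | η q < y} := by
      have : {q : M | η q < y} = {q : M | y ≤ η q}ᶜ := by
        ext q; simp [not_le]
      rw [this]
      exact (closed_ge y).isOpen_compl
    exact Filter.eventually_iff_exists_mem.mpr
      ⟨{q : M | η q < y}, hopen.mem_nhds hpy, fun q hq => hq⟩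
  refine ⟨husc, ?_⟩
  set m : ℕ := ⨅ q, η q with hm
  have hmle : ∀ p, m ≤ η p := fun p => ciInf_le (OrderBot.bddBelow _) p
  have hset : {p : M | η p = m} = {p : M | η p < m + 1} := by
    ext p
    simp only [Set.mem_setOf_eq, Nat.lt_succ_iff]
    exact ⟨fun h => h.le, fun h => le_antisymm h (hmle p)⟩
  rw [hset]
  rw [isOpen_iff_mem_nhds]
  intro p hp
  have := husc p (m + 1) hp
  exact this
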